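/- With the trumpet setup below, for every r > 0 one has w′(r) + ((n−1)/r)·w(r) ≤ 0. -/

import Mathlib

open MeasureTheory

noncomputable def u1' (n : ℕ) (s : ℝ) : ℝ := ((2 - (n : ℝ)) / 2) * s ^ (-(n : ℝ) / 2)

noncomputable def u2' (n : ℕ) (s : ℝ) : ℝ := (2 - (n : ℝ)) * s ^ (1 - (n : ℝ))

noncomputable def w (n : ℕ) (ζ : ℝ → ℝ) (s : ℝ) : ℝ :=
  ζ s * u1' n s + (1 - ζ s) * u2' n s

noncomputable def uA (n : ℕ) (ζ : ℝ → ℝ) (r₀ α r : ℝ) : ℝ :=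
  α + r₀ ^ ((2 - (n : ℝ)) / 2) - ∫ s in Set.Ioi r, w n ζ s

theorem stmt_11 (n : ℕ) (hn : 3 ≤ n) (r₀ : ℝ) (hr₀ : 0 < r₀)
    (hr₀2 : 2 * r₀ < (2 : ℝ) ^ ((2 : ℝ) / ((n : ℝ) - 2)))
    (ζ : ℝ → ℝ) (hζC : ContDiff ℝ 1 ζ) (hζ01 : ∀ r : ℝ, 0 ≤ ζ r ∧ ζ r ≤ 1)
    (hζone : ∀ r : ℝ, r ≤ r₀ → ζ r = 1) (hζzero : ∀ r : ℝ, 2 * r₀ ≤ r → ζ r = 0)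
    (hζder : ∀ r : ℝ, deriv ζ r ≤ 0)
    (r : ℝ) (hr : 0 < r) :
    deriv (w n ζ) r + (((n : ℝ) - 1) / r) * w n ζ r ≤ 0 := by
  set c : ℝ := (n : ℝ) with hcdef
  have hc : (3 : ℝ) ≤ c := by
    rw [hcdef]; exact_mod_cast hn
  -- derivatives of the power functions
  have hu1 : HasDerivAt (u1' n) (((2 - c) / 2) * ((-c / 2) * r ^ (-c / 2 - 1))) r := by
    have h := (Real.hasDerivAt_rpow_const (x := r) (p := -c / 2)
      (Or.inl hr.ne')).const_mul ((2 - c) / 2)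
    exact h
  have hu2 : HasDerivAt (u2' n) ((2 - c) * ((1 - c) * r ^ (1 - c - 1))) r := by
    have h := (Real.hasDerivAt_rpow_const (x := r) (p := 1 - c)
      (Or.inl hr.ne')).const_mul (2 - c)
    exact h
  have hζd : HasDerivAt ζ (deriv ζ r) r := ((hζC.differentiable one_ne_zero) r).hasDerivAt
  have hw : HasDerivAt (w n ζ)
      ((deriv ζ r * u1' n r + ζ r * (((2 - c) / 2) * ((-c / 2) * r ^ (-c / 2 - 1))))
        + ((0 - deriv ζ r) * u2' n r + (1 - ζ r) * ((2 - c) * ((1 - c) * r ^ (1 - c - 1))))) r := by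
    have h1 := hζd.mul hu1
    have h2 := ((hasDerivAt_const r (1 : ℝ)).sub hζd).mul hu2
    exact h1.add h2
  rw [hw.deriv]
  -- abbreviations
  set a : ℝ := r ^ (-c / 2) with hadef
  set b : ℝ := r ^ (1 - c) with hbdef
  have ha : 0 < a := Real.rpow_pos_of_pos hr _
  have hb : 0 < b := Real.rpow_pos_of_pos hr _
  set i : ℝ := r⁻¹ with hidef
  have hi0 : 0 < i := inv_pos.mpr hr
  have h1 : r ^ (-c / 2 - 1) = a * i := by
    rw [hadef, hidef, ← Real.rpow_neg_one r, ← Real.rpow_add hr]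
    ring_nf
  have h2 : r ^ (1 - c - 1) = b * i := by
    rw [hbdef, hidef, ← Real.rpow_neg_one r, ← Real.rpow_add hr]
    ring_nf
  have hdiv : (c - 1) / r = (c - 1) * i := by rw [hidef, div_eq_mul_inv]
  have hz0 := (hζ01 r).1
  have hz1 := (hζ01 r).2
  have hz' := hζder r
  rcases le_or_gt r (2 * r₀) with hcase | hcase
  · -- here r ≤ 2 r₀ < 2^(2/(c-2)), so a ≤ 2 b
    have hab : a ≤ 2 * b := by
      have he : (0 : ℝ) < (c - 2) / 2 := by linarith
      have hB : r ^ ((c - 2) / 2) ≤ 2 := by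
        have hle := Real.rpow_le_rpow hr.le (le_of_lt (lt_of_le_of_lt hcase hr₀2)) he.le
        have hBe : ((2 : ℝ) ^ ((2 : ℝ) / (c - 2))) ^ ((c - 2) / 2) = 2 := by
          rw [← Real.rpow_mul (by norm_num : (0:ℝ) ≤ 2)]
          have hx : (2 : ℝ) / (c - 2) * ((c - 2) / 2) = 1 := by
            have hne : c - 2 ≠ 0 := ne_of_gt (by linarith)
            field_simp
          rw [hx, Real.rpow_one]
        rwa [hBe] at hle
      have haeq : a = r ^ ((c - 2) / 2) * b := by
        rw [hadef, hbdef, ← Real.rpow_add hr]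
        ring_nf
      rw [haeq]
      nlinarith [hb]
    simp only [w, u1', u2', ← hcdef, ← hadef, ← hbdef, h1, h2, hdiv]
    have T1 : deriv ζ r * ((c - 2) * (b - a / 2)) ≤ 0 :=
      mul_nonpos_of_nonpos_of_nonneg hz' (by nlinarith)
    have T2 : 0 ≤ ζ r * (((c - 2) / 2) ^ 2 * (a * i)) :=
      mul_nonneg hz0 (by positivity)
    nlinarith [T1, T2]
  · -- here ζ = 0 near r and deriv ζ r = 0
    have hz : ζ r = 0 := hζzero r hcase.le
    have hz'0 : deriv ζ r = 0 := by
      have hev : ζ =ᶠ[nhds r] (fun _ => (0 : ℝ)) := by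
        filter_upwards [Ioi_mem_nhds hcase] with s hs
        exact hζzero s (le_of_lt hs)
      rw [hev.deriv_eq, deriv_const]
    simp only [w, u1', u2', ← hcdef, ← hadef, ← hbdef, h1, h2, hdiv, hz, hz'0]
    ring_nf
    nlinarith [mul_pos hb hi0]
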